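/- If B is a subring of a commutative ring A and α is a strongly n-absorbing ideal of A, then α ∩ B is a strongly n-absorbing ideal of B. -/

import Mathlib

def IsStronglyAbsorbing {A : Type*} [CommRing A] (α : Ideal A) (n : ℕ) : Prop :=
  ∀ γ : Fin (n + 1) → Ideal A, (∏ i, γ i) ≤ α →
    ∃ j, (∏ i ∈ Finset.univ.erase j, γ i) ≤ α

lemma ideal_map_finset_prod {R S : Type*} [CommRing R] [CommRing S] (f : R →+* S)
    {ι : Type*} (s : Finset ι) (γ : ι → Ideal R) :
    Ideal.map f (∏ i ∈ s, γ i) = ∏ i ∈ s, Ideal.map f (γ i) := by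
  classical
  induction s using Finset.induction with
  | empty => simp [Ideal.one_eq_top, Ideal.map_top]
  | insert _ _ hx ih => simp [Finset.prod_insert hx, Ideal.map_mul, ih]

theorem stronglyAbsorbing_comap_subring {A : Type*} [CommRing A] (B : Subring A)
    (α : Ideal A) (n : ℕ) (h : IsStronglyAbsorbing α n) :
    IsStronglyAbsorbing (α.comap B.subtype) n := by
  intro γ hγ
  have hmap : (∏ i, Ideal.map B.subtype (γ i)) ≤ α := by
    rw [← ideal_map_finset_prod]
    exact Ideal.map_le_iff_le_comap.mpr hγ
  obtain ⟨j, hj⟩ := h (fun i => Ideal.map B.subtype (γ i)) hmap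
  refine ⟨j, ?_⟩
  calc ∏ i ∈ Finset.univ.erase j, γ i
      ≤ Ideal.comap B.subtype (Ideal.map B.subtype (∏ i ∈ Finset.univ.erase j, γ i)) :=
        Ideal.le_comap_map
    _ ≤ Ideal.comap B.subtype α := by
        apply Ideal.comap_mono
        rw [ideal_map_finset_prod]
        exact hj
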